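/- For α ∈ [0,1), the singular values of the A_α matrix of the complete symmetric digraph K↔_n are n-1 (with multiplicity 1) and |nα - 1| with multiplicity n-1; hence K↔_n attains equality in the bound ‖D_α‖_* ≤ a/n + √((n-1)[(1-α)² a + α² Σ(d_i⁺)² − a²/n²]) with a = n(n-1). -/

import Mathlib

open Matrix Real
open Polynomial

/-- Adjacency matrix (over ℝ) of a digraph given by an arc relation on `Fin n`. -/
def adjMat {n : ℕ} (R : Fin n → Fin n → Prop) [DecidableRel R] :
    Matrix (Fin n) (Fin n) ℝ :=
  Matrix.of fun i j => if R i j then 1 else 0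

/-- Outdegree of a vertex. -/
def outdeg {n : ℕ} (R : Fin n → Fin n → Prop) [DecidableRel R] (i : Fin n) : ℕ :=
  (Finset.univ.filter fun j => R i j).card

/-- Indegree of a vertex. -/
def indeg {n : ℕ} (R : Fin n → Fin n → Prop) [DecidableRel R] (j : Fin n) : ℕ :=
  (Finset.univ.filter fun i => R i j).card

/-- The `A_α` matrix of a digraph: `α Δ⁺ + (1-α) A`. -/
noncomputable def Amat {n : ℕ} (α : ℝ) (R : Fin n → Fin n → Prop) [DecidableRel R] :
    Matrix (Fin n) (Fin n) ℝ :=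
  α • Matrix.diagonal (fun i => (outdeg R i : ℝ)) + (1 - α) • adjMat R

/-- The singular values of a real square matrix `M`: the nonnegative square roots of the
eigenvalues of `M Mᵀ` (`Mᴴ = Mᵀ` over ℝ). -/
noncomputable def singVals {m : Type*} [Fintype m] [DecidableEq m]
    (M : Matrix m m ℝ) (i : m) : ℝ :=
  Real.sqrt ((Matrix.isHermitian_mul_conjTranspose_self M).eigenvalues i)

/-- Trace norm: sum of the singular values. -/
noncomputable def traceNorm {m : Type*} [Fintype m] [DecidableEq m]
    (M : Matrix m m ℝ) : ℝ :=
  ∑ i, singVals M i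

/-- Spectral norm: the largest singular value. -/
noncomputable def specNorm {m : Type*} [Fintype m] [DecidableEq m]
    (M : Matrix m m ℝ) : ℝ :=
  ⨆ i, singVals M i

/-- The `A_α` matrix of the complete symmetric digraph `K↔_n`:
`α(n-1) I + (1-α)(J - I)`. -/
noncomputable def KnAlpha (n : ℕ) (α : ℝ) : Matrix (Fin n) (Fin n) ℝ :=
  (α * ((n : ℝ) - 1)) • (1 : Matrix (Fin n) (Fin n) ℝ) +
    (1 - α) • (Matrix.of (fun _ _ => (1 : ℝ)) - 1)

section conj
variable {m R : Type*} [Fintype m] [DecidableEq m] [CommRing R]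

lemma my_charpoly_conj (U W N : Matrix m m R) (hUW : U * W = 1) (hWU : W * U = 1) :
    (U * N * W).charpoly = N.charpoly := by
  unfold Matrix.charpoly
  have hkey : charmatrix (U * N * W) = (U.map C) * charmatrix N * (W.map C) := by
    unfold charmatrix
    simp only [Matrix.mul_sub, Matrix.sub_mul, RingHom.mapMatrix_apply]
    congr 1
    · have h1 : Matrix.scalar m (X : R[X]) = (X : R[X]) • (1 : Matrix m m R[X]) := by
        simp [Matrix.scalar, Matrix.smul_one_eq_diagonal]
      rw [h1]
      rw [Matrix.mul_smul, Matrix.mul_one, Matrix.smul_mul, ← Matrix.map_mul, hUW, Matrix.map_one C (map_zero C) (map_one C)]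
    · rw [← Matrix.map_mul, ← Matrix.map_mul]
  rw [hkey, Matrix.det_mul, Matrix.det_mul]
  have : (U.map C).det * (W.map C).det = 1 := by
    rw [← Matrix.det_mul, ← Matrix.map_mul, hUW, Matrix.map_one C (map_zero C) (map_one C), Matrix.det_one]
  calc (U.map C).det * (charmatrix N).det * (W.map C).det
      = (U.map C).det * (W.map C).det * (charmatrix N).det := by ring
    _ = (charmatrix N).det := by rw [this, one_mul]

lemma my_charpoly_diagonal (d : m → R) :
    (Matrix.diagonal d).charpoly = ∏ i, (X - C (d i)) := by
  unfold Matrix.charpoly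
  have : charmatrix (Matrix.diagonal d) = Matrix.diagonal fun i => (X : R[X]) - C (d i) := by
    ext i j
    by_cases h : i = j
    · subst h; simp [charmatrix_apply_eq]
    · rw [charmatrix_apply_ne _ _ _ h]; simp [Matrix.diagonal_apply_ne _ h]
  rw [this, Matrix.det_diagonal]

end conj

section helpers
variable (n : ℕ) (α : ℝ)

def Jmat (n : ℕ) : Matrix (Fin n) (Fin n) ℝ := Matrix.of fun _ _ => (1 : ℝ)

lemma Jmat_transpose : (Jmat n)ᵀ = Jmat n := by ext i j; simp [Jmat]

lemma Jmat_mul_Jmat : Jmat n * Jmat n = (n : ℝ) • Jmat n := by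
  ext i j
  simp [Jmat, Matrix.mul_apply]

lemma KnAlpha_eq : KnAlpha n α = ((n : ℝ) * α - 1) • 1 + (1 - α) • Jmat n := by
  unfold KnAlpha Jmat
  rw [smul_sub]
  ext i j
  by_cases h : i = j <;>
    simp [h, Matrix.one_apply, Matrix.add_apply, Matrix.sub_apply] <;> ring

lemma KnAlpha_transpose : (KnAlpha n α)ᵀ = KnAlpha n α := by
  rw [KnAlpha_eq, transpose_add, transpose_smul, transpose_smul, transpose_one, Jmat_transpose]

lemma KnAlpha_mul_self :
    KnAlpha n α * (KnAlpha n α)ᵀ =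
      (((n : ℝ) * α - 1) ^ 2) • 1 +
        (2 * ((n : ℝ) * α - 1) * (1 - α) + (n : ℝ) * (1 - α) ^ 2) • Jmat n := by
  rw [KnAlpha_transpose, KnAlpha_eq]
  set c := (n : ℝ) * α - 1
  set d := 1 - α
  rw [add_mul, mul_add, mul_add]
  simp only [smul_mul_assoc, mul_smul_comm, one_mul, mul_one, Jmat_mul_Jmat]
  module
end helpers

section charpoly
variable {n : ℕ}

lemma eval_charpoly' (A : Matrix (Fin n) (Fin n) ℝ) (x : ℝ) :
    (A.charpoly).eval x = (x • (1 : Matrix (Fin n) (Fin n) ℝ) - A).det := by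
  rw [Matrix.charpoly, ← Polynomial.coe_evalRingHom, RingHom.map_det]
  congr 1
  ext i j
  rw [RingHom.mapMatrix_apply, Matrix.map_apply]
  by_cases h : i = j
  · subst h
    simp [charmatrix_apply_eq, Matrix.one_apply]
  · rw [charmatrix_apply_ne _ _ _ h]
    simp [Matrix.one_apply_ne h, h]

lemma det_smul_one_add_smul_J (hn : 1 ≤ n) (c d : ℝ) (hc : c ≠ 0) :
    (c • (1 : Matrix (Fin n) (Fin n) ℝ) + d • Jmat n).det = c ^ (n - 1) * (c + d * n) := by
  have key : c • (1 : Matrix (Fin n) (Fin n) ℝ) + d • Jmat n =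
      c • (1 + Matrix.replicateCol Unit (fun _ => d / c) * Matrix.replicateRow Unit (fun _ => (1 : ℝ))) := by
    rw [smul_add]
    congr 1
    ext i j
    simp [Jmat, Matrix.mul_apply, Matrix.replicateCol, Matrix.replicateRow, div_mul_eq_mul_div,
      mul_div_assoc, mul_div_cancel₀ _ hc]
  rw [key, Matrix.det_smul, Matrix.det_one_add_replicateCol_mul_replicateRow]
  rcases n with _ | m
  · omega
  · have hdp : (fun _ : Fin (m+1) => (1:ℝ)) ⬝ᵥ (fun _ => d / c) = ((m:ℝ)+1) * (d / c) := by
      simp [dotProduct]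
    rw [hdp]
    simp only [Fintype.card_fin, Nat.add_sub_cancel]
    have hpow : c ^ (m + 1) = c ^ m * c := by ring
    rw [hpow]
    push_cast
    field_simp
end charpoly

lemma KnAlpha_charpoly (n : ℕ) (hn : 1 ≤ n) (α : ℝ) :
    (KnAlpha n α * (KnAlpha n α)ᵀ).charpoly =
      (X - C (((n : ℝ) * α - 1) ^ 2)) ^ (n - 1) * (X - C (((n : ℝ) - 1) ^ 2)) := by
  set a : ℝ := ((n : ℝ) * α - 1) ^ 2 with ha
  set b : ℝ := 2 * ((n : ℝ) * α - 1) * (1 - α) + (n : ℝ) * (1 - α) ^ 2 with hb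
  apply Polynomial.eq_of_infinite_eval_eq
  apply Set.Infinite.mono (s := {a}ᶜ)
  · intro x hx
    have hxa : x ≠ a := hx
    have hxa' : x - a ≠ 0 := sub_ne_zero.mpr hxa
    simp only [Set.mem_setOf_eq]
    rw [eval_charpoly', KnAlpha_mul_self, ← hb]
    have hmat : x • (1 : Matrix (Fin n) (Fin n) ℝ) - (a • 1 + b • Jmat n) =
        (x - a) • 1 + (-b) • Jmat n := by
      rw [sub_smul, neg_smul]
      abel
    rw [hmat, det_smul_one_add_smul_J hn _ _ hxa']
    rw [eval_mul, eval_pow, eval_sub, eval_sub, eval_X, eval_C, eval_C]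
    have key : a + b * n = ((n : ℝ) - 1) ^ 2 := by rw [ha, hb]; ring
    have : x - a + -b * (n : ℝ) = x - ((n : ℝ) - 1) ^ 2 := by rw [← key]; ring
    rw [this]
  · exact Set.Finite.infinite_compl (Set.finite_singleton a)

lemma KnAlpha_roots (n : ℕ) (hn : 1 ≤ n) (α : ℝ) :
    (KnAlpha n α * (KnAlpha n α)ᵀ).charpoly.roots =
      Multiset.replicate (n - 1) (((n : ℝ) * α - 1) ^ 2) + {((n : ℝ) - 1) ^ 2} := by
  rw [KnAlpha_charpoly n hn α, Polynomial.roots_mul, Polynomial.roots_pow,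
    Polynomial.roots_X_sub_C, Polynomial.roots_X_sub_C, Multiset.nsmul_singleton]
  exact mul_ne_zero (pow_ne_zero _ (Polynomial.X_sub_C_ne_zero _)) (Polynomial.X_sub_C_ne_zero _)

lemma KnAlpha_roots_sqrt (n : ℕ) (hn : 1 ≤ n) (α : ℝ) :
    ((KnAlpha n α * (KnAlpha n α)ᵀ).charpoly.roots).map Real.sqrt =
      ((n : ℝ) - 1) ::ₘ Multiset.replicate (n - 1) |(n : ℝ) * α - 1| := by
  rw [KnAlpha_roots n hn α, Multiset.map_add, Multiset.map_replicate, Multiset.map_singleton]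
  have h1 : Real.sqrt ((((n : ℝ)) * α - 1) ^ 2) = |(n : ℝ) * α - 1| := Real.sqrt_sq_eq_abs _
  have h2 : Real.sqrt (((n : ℝ) - 1) ^ 2) = (n : ℝ) - 1 := by
    rw [Real.sqrt_sq]
    have : (1 : ℝ) ≤ (n : ℝ) := by exact_mod_cast hn
    linarith
  rw [h1, h2, add_comm, Multiset.singleton_add]

lemma herm_charpoly {n : ℕ} (A : Matrix (Fin n) (Fin n) ℝ) (hA : A.IsHermitian) :
    A.charpoly = ∏ i, (X - C (hA.eigenvalues i)) := by
  have hspec := hA.spectral_theorem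
  set V : Matrix (Fin n) (Fin n) ℝ := (Matrix.IsHermitian.eigenvectorUnitary hA : Matrix (Fin n) (Fin n) ℝ) with hV
  have hmem := (Matrix.IsHermitian.eigenvectorUnitary hA).2
  have h1 : V * star V = 1 := hmem.2
  have h2 : star V * V = 1 := hmem.1
  have hdiag : (Matrix.diagonal (RCLike.ofReal ∘ hA.eigenvalues) : Matrix (Fin n) (Fin n) ℝ)
      = Matrix.diagonal hA.eigenvalues := by
    congr 1
  calc A.charpoly = (V * Matrix.diagonal hA.eigenvalues * star V).charpoly := by
        rw [← hdiag]
        conv_lhs => rw [hspec]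
        rw [Unitary.conjStarAlgAut_apply]
    _ = (Matrix.diagonal hA.eigenvalues).charpoly := my_charpoly_conj _ _ _ h1 h2
    _ = ∏ i, (X - C (hA.eigenvalues i)) := my_charpoly_diagonal _

lemma herm_roots {n : ℕ} (A : Matrix (Fin n) (Fin n) ℝ) (hA : A.IsHermitian) :
    A.charpoly.roots = Finset.univ.val.map hA.eigenvalues := by
  rw [herm_charpoly A hA, Finset.prod_eq_multiset_prod]
  have hmm : Multiset.map (fun i => X - C (hA.eigenvalues i)) Finset.univ.val
      = Multiset.map (fun a => X - C a) (Finset.univ.val.map hA.eigenvalues) := by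
    rw [Multiset.map_map]; rfl
  rw [hmm, Polynomial.roots_multiset_prod_X_sub_C]

/-- The singular values of `A_α(K↔_n)` are `n-1` (once) and `|nα - 1|` with multiplicity
`n-1`; hence `K↔_n` attains equality in the Koolen–Moulton-type upper bound with
`a = n(n-1)` and `Σ(d_i⁺)² = n(n-1)²`. -/
theorem stmt_19 (n : ℕ) (hn : 1 ≤ n) (α : ℝ) (hα0 : 0 ≤ α) (hα1 : α < 1) :
    (((KnAlpha n α * (KnAlpha n α)ᵀ).charpoly.roots).map Real.sqrt =
        ((n : ℝ) - 1) ::ₘ Multiset.replicate (n - 1) |(n : ℝ) * α - 1|) ∧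
      traceNorm (KnAlpha n α) =
        ((n : ℝ) * ((n : ℝ) - 1)) / n + Real.sqrt (((n : ℝ) - 1) *
          ((1 - α) ^ 2 * ((n : ℝ) * ((n : ℝ) - 1)) +
            α ^ 2 * ((n : ℝ) * ((n : ℝ) - 1) ^ 2) -
            ((n : ℝ) * ((n : ℝ) - 1)) ^ 2 / (n : ℝ) ^ 2)) := by
  have hn0 : (n : ℝ) ≠ 0 := by positivity
  have hn1 : (1 : ℝ) ≤ (n : ℝ) := by exact_mod_cast hn
  refine ⟨KnAlpha_roots_sqrt n hn α, ?_⟩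
  set M := KnAlpha n α with hM
  have hMH : M * Mᴴ = M * Mᵀ := by
    rw [Matrix.conjTranspose_eq_transpose_of_trivial]
  set hA := Matrix.isHermitian_mul_conjTranspose_self M with hhA
  -- LHS computation
  have hlhs : traceNorm M = (((M * Mᴴ).charpoly.roots).map Real.sqrt).sum := by
    rw [herm_roots _ hA]
    unfold traceNorm singVals
    rw [Finset.sum_eq_multiset_sum, Multiset.map_map]
    rfl
  have hroots : (((M * Mᴴ).charpoly.roots).map Real.sqrt) =
      ((n : ℝ) - 1) ::ₘ Multiset.replicate (n - 1) |(n : ℝ) * α - 1| := by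
    rw [hMH]
    exact KnAlpha_roots_sqrt n hn α
  rw [hlhs, hroots, Multiset.sum_cons, Multiset.sum_replicate, nsmul_eq_mul]
  have hcast : ((n - 1 : ℕ) : ℝ) = (n : ℝ) - 1 := by
    rw [Nat.cast_sub hn, Nat.cast_one]
  -- RHS simplification
  have h1 : ((n : ℝ) * ((n : ℝ) - 1)) / n = (n : ℝ) - 1 := by field_simp
  have harg : ((n : ℝ) - 1) *
      ((1 - α) ^ 2 * ((n : ℝ) * ((n : ℝ) - 1)) +
        α ^ 2 * ((n : ℝ) * ((n : ℝ) - 1) ^ 2) -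
        ((n : ℝ) * ((n : ℝ) - 1)) ^ 2 / (n : ℝ) ^ 2) =
      ((((n : ℝ) - 1)) * ((n : ℝ) * α - 1)) ^ 2 := by
    field_simp
    ring
  rw [h1, harg, Real.sqrt_sq_eq_abs, abs_mul, abs_of_nonneg (by linarith : (0:ℝ) ≤ (n:ℝ) - 1),
    hcast]
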